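/- For a nice function f : ℝⁿ → ℤ (right continuous, with finitely supported differential Δf and support bounded below), the function is recovered from its differential by summation: f(x) = Σ_{y ≤ x} Δf(y) for all x ∈ ℝⁿ. -/

import Mathlib

open scoped ENNReal NNReal
open Filter
noncomputable section
attribute [local instance] Classical.propDecidable
set_option linter.unusedVariables false

/-- Points of the poset ℝⁿ. The product instance gives the pointwise partial order
and the sup-norm metric. -/
abbrev Pt (n : ℕ) := Fin n → ℝ

/-- The diagonal vector δ⃗ = (δ,...,δ). -/
def diag (n : ℕ) (δ : ℝ) : Pt n := fun _ => δ

lemma le_add_diag {n : ℕ} (x : Pt n) {δ : ℝ} (hδ : 0 ≤ δ) : x ≤ x + diag n δ :=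
  fun _ => le_add_of_nonneg_right hδ

/-- A (p.f.d.-agnostic) persistence module over the poset ℝⁿ with values in
k-vector spaces: a functor from ℝⁿ to Vec. -/
structure PersMod (n : ℕ) (k : Type*) [Field k] where
  V : Pt n → Type*
  [addgrp : ∀ x, AddCommGroup (V x)]
  [mod : ∀ x, Module k (V x)]
  ρ : ∀ {x y : Pt n}, x ≤ y → (V x →ₗ[k] V y)
  ρ_id : ∀ x : Pt n, ρ (le_refl x) = LinearMap.id
  ρ_comp : ∀ {x y z : Pt n} (h1 : x ≤ y) (h2 : y ≤ z), ρ (h1.trans h2) = (ρ h2).comp (ρ h1)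

attribute [instance] PersMod.addgrp PersMod.mod

variable {n : ℕ} {k : Type*} [Field k]

/-- A morphism (natural transformation) of persistence modules. -/
structure PersHom (M N : PersMod n k) where
  app : ∀ x, M.V x →ₗ[k] N.V x
  natural : ∀ {x y : Pt n} (h : x ≤ y), (app y).comp (M.ρ h) = (N.ρ h).comp (app x)

/-- A δ-interleaving between M and N: families φ_x : M_x → N_{x+δ⃗},
ψ_x : N_x → M_{x+δ⃗} satisfying square and triangular commutativity. -/
def PersMod.Interleaved (M N : PersMod n k) (δ : ℝ≥0) : Prop :=
  ∃ (φ : ∀ x : Pt n, M.V x →ₗ[k] N.V (x + diag n (δ : ℝ)))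
    (ψ : ∀ x : Pt n, N.V x →ₗ[k] M.V (x + diag n (δ : ℝ))),
    (∀ {x y : Pt n} (h : x ≤ y),
        (φ y).comp (M.ρ h) = (N.ρ (add_le_add_left h _)).comp (φ x)) ∧
    (∀ {x y : Pt n} (h : x ≤ y),
        (ψ y).comp (N.ρ h) = (M.ρ (add_le_add_left h _)).comp (ψ x)) ∧
    (∀ x : Pt n, M.ρ ((le_add_diag x δ.coe_nonneg).trans (le_add_diag _ δ.coe_nonneg))
        = (ψ (x + diag n (δ : ℝ))).comp (φ x)) ∧
    (∀ x : Pt n, N.ρ ((le_add_diag x δ.coe_nonneg).trans (le_add_diag _ δ.coe_nonneg))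
        = (φ (x + diag n (δ : ℝ))).comp (ψ x))

/-- The interleaving distance (∞ if no interleaving exists). -/
def PersMod.dI (M N : PersMod n k) : ℝ≥0∞ :=
  ⨅ (δ : ℝ≥0) (_ : M.Interleaved N δ), (δ : ℝ≥0∞)

/-- The diagonal shift M_{→d}. -/
def PersMod.dshift (M : PersMod n k) (d : ℝ) : PersMod n k where
  V x := M.V (x + diag n d)
  ρ h := M.ρ (add_le_add_left h _)
  ρ_id x := M.ρ_id _
  ρ_comp h1 h2 := M.ρ_comp _ _

/-- M is c-trivial: every structure map over a diagonal shift by c is zero. -/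
def PersMod.DTrivial (M : PersMod n k) (c : ℝ≥0) : Prop :=
  ∀ x : Pt n, M.ρ (le_add_diag x c.coe_nonneg) = 0

/-- The 1-parameter slice of M along the diagonal line through x. -/
def PersMod.slice (M : PersMod n k) (x : Pt n) : PersMod 1 k where
  V t := M.V (x + diag n (t 0))
  ρ {t t'} h := M.ρ (fun i => add_le_add_right (h 0) (x i))
  ρ_id t := M.ρ_id _
  ρ_comp h1 h2 := M.ρ_comp _ _

/-- δ* = sup over diagonal lines of the slice interleaving distances. -/
def deltaStar (M N : PersMod n k) : ℝ≥0∞ :=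
  ⨆ x : Pt n, (M.slice x).dI (N.slice x)

/-- Finite direct sum of persistence modules. -/
def dirSum {ι : Type} [Fintype ι] (Ms : ι → PersMod n k) : PersMod n k where
  V x := ∀ i, (Ms i).V x
  ρ h := LinearMap.pi (fun i => ((Ms i).ρ h).comp (LinearMap.proj i))
  ρ_id x := by
    apply LinearMap.ext; intro v; funext i
    simp [(Ms i).ρ_id]
  ρ_comp h1 h2 := by
    apply LinearMap.ext; intro v; funext i
    show ((Ms i).ρ (h1.trans h2)) (v i) = _
    rw [(Ms i).ρ_comp h1 h2]; rfl

/-- Zigzag reachability inside a set: p ≤ p₁ ≥ p₂ ≤ ... with all points in A. -/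
def Zigzag (A : Set (Pt n)) : Pt n → Pt n → Prop :=
  Relation.ReflTransGen (fun a b => a ∈ A ∧ b ∈ A ∧ (a ≤ b ∨ b ≤ a))

/-- An interval: nonempty, order-convex, zigzag-connected. -/
def IsPInterval (I : Set (Pt n)) : Prop :=
  I.Nonempty ∧ (∀ p ∈ I, ∀ q ∈ I, ∀ r, p ≤ r → r ≤ q → r ∈ I) ∧
    ∀ p ∈ I, ∀ q ∈ I, Zigzag I p q

/-- Q is a (zigzag-)connected component of A. -/
def IsComponent (A Q : Set (Pt n)) : Prop :=
  ∃ p ∈ A, Q = {q | Zigzag A p q}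

/-- The fibre of the interval module with interval I: k on I, 0 elsewhere,
realised as a submodule of k. -/
def subOf (k : Type*) [Field k] (I : Set (Pt n)) (x : Pt n) : Submodule k k :=
  if x ∈ I then ⊤ else ⊥

/-- The canonical map between fibres: identity within I, zero otherwise. -/
def stepFun (I : Set (Pt n)) (x y : Pt n) :
    ↥(subOf k I x) →ₗ[k] ↥(subOf k I y) where
  toFun v := ⟨if y ∈ I then (v : k) else 0, by
    by_cases hy : y ∈ I
    · rw [if_pos hy]; unfold subOf; rw [if_pos hy]; exact Submodule.mem_top
    · rw [if_neg hy]; exact Submodule.zero_mem _⟩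
  map_add' a b := by
    by_cases hy : y ∈ I <;> · apply Subtype.ext; simp [hy]
  map_smul' c a := by
    by_cases hy : y ∈ I <;> · apply Subtype.ext; simp [hy]

/-- The interval module with interval I. -/
def IntervalMod (k : Type*) [Field k] (I : Set (Pt n)) (hI : IsPInterval I) :
    PersMod n k where
  V x := ↥(subOf k I x)
  ρ {x y} _ := stepFun I x y
  ρ_id x := by
    apply LinearMap.ext; intro v
    apply Subtype.ext
    by_cases hx : x ∈ I
    · simp [stepFun, hx]
    · have hv : (v : k) = 0 := by
          have hw : ∀ w : k, w ∈ subOf k I x → w = 0 := fun w hw => by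
            unfold subOf at hw; rw [if_neg hx] at hw; exact (Submodule.mem_bot k).mp hw
          exact hw _ v.2
      simp [stepFun, hx, hv]
  ρ_comp {x y z} h1 h2 := by
    apply LinearMap.ext; intro v
    apply Subtype.ext
    by_cases hz : z ∈ I
    · by_cases hy : y ∈ I
      · simp [stepFun, hy, hz]
      · have hx : x ∉ I := fun hx => hy (hI.2.1 x hx z hz y h1 h2)
        have hv : (v : k) = 0 := by
          have hw : ∀ w : k, w ∈ subOf k I x → w = 0 := fun w hw => by
            unfold subOf at hw; rw [if_neg hx] at hw; exact (Submodule.mem_bot k).mp hw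
          exact hw _ v.2
        simp [stepFun, hy, hz, hv]
    · simp [stepFun, hz]

/-- Lower boundary L(I). -/
def lowerBd (I : Set (Pt n)) : Set (Pt n) :=
  {x | x ∈ closure I ∧ ∀ y : Pt n, (∀ i, y i < x i) → y ∉ I}

/-- Upper boundary U(I). -/
def upperBd (I : Set (Pt n)) : Set (Pt n) :=
  {x | x ∈ closure I ∧ ∀ y : Pt n, (∀ i, x i < y i) → y ∉ I}

/-- Diagonal distance dl(x, A): the infimum of sup-norm distances from x to
points of A along the diagonal line Δ_x, ∞ when Δ_x ∩ A = ∅. -/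
def dl (x : Pt n) (A : Set (Pt n)) : ℝ≥0∞ :=
  ⨅ (α : ℝ) (_ : x + diag n α ∈ A), ENNReal.ofReal |α|

/-- d_triv^{(M,N)}(x) = max(dl(x,U(I_M))/2, dl(x,L(I_N))/2). -/
def dtriv (IM IN : Set (Pt n)) (x : Pt n) : ℝ≥0∞ :=
  max (dl x (upperBd IM) / 2) (dl x (lowerBd IN) / 2)

/-- An intersection component with interval Q is δ_{(M,N)}-trivializable. -/
def Trivializable (IM IN Q : Set (Pt n)) (δ : ℝ≥0∞) : Prop :=
  ∀ x ∈ Q, dtriv IM IN x < δ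

/-- (M,N)-validity of an intersection component with interval Q. -/
def MNValid (IM IN Q : Set (Pt n)) : Prop :=
  ∀ x ∈ Q, (∀ y : Pt n, y ≤ x → y ∈ IM → y ∈ IN) ∧
    (∀ z : Pt n, x ≤ z → z ∈ IN → z ∈ IM)

/-- The interval of the shifted module N_{→d}. -/
def shiftSet (I : Set (Pt n)) (d : ℝ) : Set (Pt n) := {x | x + diag n d ∈ I}

/-- A vertex of (the boundary of) a set: a boundary point through which no
nontrivial line segment of the boundary passes. -/
def IsVertex (I : Set (Pt n)) (x : Pt n) : Prop :=
  x ∈ frontier I ∧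
    ¬ ∃ v : Pt n, v ≠ 0 ∧ ∃ ε > (0:ℝ), ∀ t : ℝ, |t| < ε → x + t • v ∈ frontier I

/-- An axis-aligned (possibly degenerate) rectangle. -/
def IsRect (R : Set (Pt n)) : Prop := ∃ a b : Pt n, a ≤ b ∧ R = Set.Icc a b

/-- A discretely presented interval: a finite union of rectangles. -/
def DiscPresented (I : Set (Pt n)) : Prop :=
  ∃ F : Finset (Set (Pt n)), (∀ R ∈ F, IsRect R) ∧ I = ⋃ R ∈ F, (R : Set (Pt n))

/-- f is a facet of I orthogonal to direction i: contained in a hyperplane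
{y_i = c}, contained in the lower or upper boundary, and (n−1)-dimensional
(contains a full hyperplane patch around one of its points). -/
def IsFacetDir (I : Set (Pt n)) (f : Set (Pt n)) (i : Fin n) : Prop :=
  ∃ c : ℝ, f ⊆ {y | y i = c} ∧ (f ⊆ lowerBd I ∨ f ⊆ upperBd I) ∧
    ∃ z ∈ f, ∃ ε > (0:ℝ), ∀ y : Pt n, y i = c → dist y z < ε → y ∈ f

/-- The set D(x) of the four diagonal boundary distances. -/
def candD (IM IN : Set (Pt n)) (x : Pt n) : Set ℝ≥0∞ :=
  {dl x (lowerBd IM), dl x (lowerBd IN), dl x (upperBd IM), dl x (upperBd IN)}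

/-- The candidate set S. -/
def candS (IM IN : Set (Pt n)) : Set ℝ≥0∞ :=
  {d | ∃ x : Pt n, (IsVertex IM x ∨ IsVertex IN x) ∧
    (d ∈ candD IM IN x ∨ 2 * d ∈ candD IM IN x)}

/-- One-sided limit lim_{ε→0+} f(x − ε v) (junk value if the limit fails to exist). -/
def dlim (f : Pt n → ℤ) (x v : Pt n) : ℤ :=
  limUnder (nhdsWithin (0:ℝ) (Set.Ioi 0)) (fun ε : ℝ => f (x - ε • v))

/-- The indicator vector Σ_{i ∈ s} e_i. -/
def basisVec (n : ℕ) (s : Finset (Fin n)) : Pt n := fun i => if i ∈ s then 1 else 0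

/-- The differential Δf(x) = Σ_k (−1)^k Σ_{|s|=k} lim_{ε→0+} f(x − ε Σ_{i∈s} e_i). -/
def diffl (f : Pt n → ℤ) (x : Pt n) : ℤ :=
  ∑ s : Finset (Fin n), (-1 : ℤ) ^ s.card * dlim f x (basisVec n s)

/-- Right continuity of f : ℝⁿ → ℤ. -/
def RightCont (f : Pt n → ℤ) : Prop :=
  ∀ x : Pt n, Filter.Tendsto f (nhdsWithin x (Set.Ici x)) (nhds (f x))

/-- A nice function: right continuous, finitely supported differential,
support bounded below. -/
def NiceFn (f : Pt n → ℤ) : Prop :=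
  RightCont f ∧ {x | diffl f x ≠ 0}.Finite ∧ ∃ a : ℝ, ∀ x, f x ≠ 0 → ∀ i, a ≤ x i

/-- Positive part Δf₊. -/
def difflp (f : Pt n → ℤ) (x : Pt n) : ℤ := max (diffl f x) 0
/-- Negative part Δf₋. -/
def difflm (f : Pt n → ℤ) (x : Pt n) : ℤ := min (diffl f x) 0

/-- Σ_{y ≤ x} g(y), as a finite sum over the support. -/
def sumLe (g : Pt n → ℤ) (x : Pt n) : ℤ := ∑ᶠ y ∈ {y : Pt n | y ≤ x}, g y

/-- The δ-extension f^{+δ}(x) = f_{Σ+}(x+δ⃗) + f_{Σ−}(x−δ⃗). -/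
def extend (f : Pt n → ℤ) (δ : ℝ) (x : Pt n) : ℤ :=
  sumLe (difflp f) (x + diag n δ) + sumLe (difflm f) (x - diag n δ)

/-- The δ-shrinking f^{−δ}(x) = f_{Σ−}(x+δ⃗) + f_{Σ+}(x−δ⃗). -/
def shrink (f : Pt n → ℤ) (δ : ℝ) (x : Pt n) : ℤ :=
  sumLe (difflm f) (x + diag n δ) + sumLe (difflp f) (x - diag n δ)

/-- d₊(f,g) = inf{δ : f ≤ g^{+δ}, g ≤ f^{+δ}}. -/
def dplus (f g : Pt n → ℤ) : ℝ≥0∞ :=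
  ⨅ (δ : ℝ≥0) (_ : (∀ x, f x ≤ extend g δ x) ∧ (∀ x, g x ≤ extend f δ x)), (δ : ℝ≥0∞)

/-- d₋(f,g) = inf{δ : f ≥ g^{−δ}, g ≥ f^{−δ}}. -/
def dminus (f g : Pt n → ℤ) : ℝ≥0∞ :=
  ⨅ (δ : ℝ≥0) (_ : (∀ x, shrink g δ x ≤ f x) ∧ (∀ x, shrink f δ x ≤ g x)), (δ : ℝ≥0∞)

/-- The dimension distance d₀ = min(d₋, d₊). -/
def d0 (f g : Pt n → ℤ) : ℝ≥0∞ := min (dminus f g) (dplus f g)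

/-- The dimension function dm M(x) = dim M_x (as an integer). -/
def dmFun (M : PersMod n k) : Pt n → ℤ := fun x => (Module.finrank k (M.V x) : ℤ)

/-- A nice persistence module: all structure maps over sufficiently small
diagonal shifts are injective or surjective. -/
def PersMod.Nice (M : PersMod n k) : Prop :=
  ∃ ε₀ > (0:ℝ), ∀ ε : ℝ, ∀ h0 : 0 < ε, ε < ε₀ → ∀ x : Pt n,
    Function.Injective (M.ρ (le_add_diag x h0.le)) ∨
      Function.Surjective (M.ρ (le_add_diag x h0.le))

/-- Composition ρ_i ∘ ... ∘ ρ₁ of a chain of linear maps. -/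
def chainComp {K : Type*} [Field K] (V : ℕ → Type*) [∀ i, AddCommGroup (V i)]
    [∀ i, Module K (V i)] (ρ : ∀ i, V i →ₗ[K] V (i+1)) : ∀ i, V 0 →ₗ[K] V i
  | 0 => LinearMap.id
  | (i+1) => (ρ i).comp (chainComp V ρ i)



namespace Stmt13Aux

open Filter Set

variable {n : ℕ}

lemma sub_smul_basisVec_apply (x : Pt n) (ε : ℝ) (s : Finset (Fin n)) (i : Fin n) :
    (x - ε • basisVec n s) i = x i - (if i ∈ s then ε else 0) := by
  by_cases h : i ∈ s <;> simp [basisVec, h]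

lemma dlim_eq_of_eventually {f : Pt n → ℤ} {x v : Pt n} {c : ℤ}
    (h : ∀ᶠ ε in nhdsWithin (0:ℝ) (Set.Ioi 0), f (x - ε • v) = c) : dlim f x v = c := by
  have ht : Filter.Tendsto (fun ε : ℝ => f (x - ε • v)) (nhdsWithin (0:ℝ) (Set.Ioi 0)) (nhds c) :=
    Filter.Tendsto.congr' (by filter_upwards [h] with ε hε using hε.symm) tendsto_const_nhds
  exact ht.limUnder_eq

lemma dlim_empty (f : Pt n → ℤ) (x : Pt n) : dlim f x (basisVec n ∅) = f x := by
  apply dlim_eq_of_eventually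
  refine Filter.Eventually.of_forall fun ε => ?_
  have hx : x - ε • basisVec n ∅ = x := by
    funext i; simp [basisVec]
  rw [hx]

/-- The limiting condition: `y ≤ x` with strict inequality in coordinates of `s`. -/
def chiP (s : Finset (Fin n)) (y x : Pt n) : Prop :=
  ∀ i, if i ∈ s then y i < x i else y i ≤ x i

lemma eventually_le_iff (y x : Pt n) (s : Finset (Fin n)) :
    ∀ᶠ ε in nhdsWithin (0:ℝ) (Set.Ioi 0),
      (y ≤ x - ε • basisVec n s ↔ chiP s y x) := by
  have H : ∀ i : Fin n, ∀ᶠ ε in nhdsWithin (0:ℝ) (Set.Ioi 0),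
      (y i ≤ (x - ε • basisVec n s) i ↔ (if i ∈ s then y i < x i else y i ≤ x i)) := by
    intro i
    by_cases hi : i ∈ s
    · by_cases hlt : y i < x i
      · filter_upwards [Ioo_mem_nhdsGT (sub_pos.mpr hlt)] with ε hε
        rw [sub_smul_basisVec_apply, if_pos hi, if_pos hi]
        obtain ⟨h1, h2⟩ := hε
        constructor
        · intro _; exact hlt
        · intro _; linarith
      · filter_upwards [self_mem_nhdsWithin] with ε hε
        have hε' : (0:ℝ) < ε := hε
        rw [sub_smul_basisVec_apply, if_pos hi, if_pos hi]
        push_neg at hlt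
        exact iff_of_false (by linarith) (by exact fun hc => absurd hc (not_lt.mpr hlt))
    · filter_upwards with ε
      rw [sub_smul_basisVec_apply, if_neg hi, if_neg hi, sub_zero]
  filter_upwards [Filter.eventually_all.mpr H] with ε hε
  constructor
  · intro hle i; exact (hε i).mp (hle i)
  · intro hchi i; exact (hε i).mpr (hchi i)

/-- Local constancy on boxes to the upper right. -/
def RBoxP (φ : Pt n → ℤ) : Prop :=
  ∀ x : Pt n, ∃ δ > (0:ℝ), ∀ y : Pt n, x ≤ y → (∀ i, y i < x i + δ) → φ y = φ x

lemma RBoxP.sub {φ ψ : Pt n → ℤ} (hφ : RBoxP φ) (hψ : RBoxP ψ) :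
    RBoxP (fun z => φ z - ψ z) := by
  intro x
  obtain ⟨d1, hd1, h1⟩ := hφ x
  obtain ⟨d2, hd2, h2⟩ := hψ x
  refine ⟨min d1 d2, lt_min hd1 hd2, fun y hy hlt => ?_⟩
  have e1 := h1 y hy (fun i => lt_of_lt_of_le (hlt i) (by linarith [min_le_left d1 d2]))
  have e2 := h2 y hy (fun i => lt_of_lt_of_le (hlt i) (by linarith [min_le_right d1 d2]))
  simp [e1, e2]

lemma RBoxP.add {φ ψ : Pt n → ℤ} (hφ : RBoxP φ) (hψ : RBoxP ψ) :
    RBoxP (fun z => φ z + ψ z) := by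
  intro x
  obtain ⟨d1, hd1, h1⟩ := hφ x
  obtain ⟨d2, hd2, h2⟩ := hψ x
  refine ⟨min d1 d2, lt_min hd1 hd2, fun y hy hlt => ?_⟩
  have e1 := h1 y hy (fun i => lt_of_lt_of_le (hlt i) (by linarith [min_le_left d1 d2]))
  have e2 := h2 y hy (fun i => lt_of_lt_of_le (hlt i) (by linarith [min_le_right d1 d2]))
  simp [e1, e2]

lemma rbox_corner (y0 : Pt n) (w : ℤ) : RBoxP (fun z => if y0 ≤ z then w else 0) := by
  intro x
  by_cases hy : y0 ≤ x
  · exact ⟨1, one_pos, fun z hz _ => by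
      show (if y0 ≤ z then w else 0) = (if y0 ≤ x then w else 0)
      rw [if_pos (hy.trans hz), if_pos hy]⟩
  · have hex : ∃ i, ¬ y0 i ≤ x i := by
      by_contra hall
      push_neg at hall
      exact hy fun i => hall i
    obtain ⟨i, hi⟩ := hex
    push_neg at hi
    refine ⟨y0 i - x i, sub_pos.mpr hi, fun z hz hlt => ?_⟩
    have hnz : ¬ y0 ≤ z := by
      intro hyz
      have h1 := hyz i
      have h2 := hlt i
      have h3 := h1.trans_lt h2
      simp at h3
    show (if y0 ≤ z then w else 0) = (if y0 ≤ x then w else 0)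
    rw [if_neg hnz, if_neg hy]

lemma rbox_sum (S' : Finset (Pt n)) (w : Pt n → ℤ) :
    RBoxP (fun z => ∑ y ∈ S', if y ≤ z then w y else 0) := by
  classical
  induction S' using Finset.induction_on with
  | empty => exact fun x => ⟨1, one_pos, fun _ _ _ => by simp⟩
  | insert _ _ hx ih =>
    rename_i a S''
    have := (rbox_corner a (w a)).add ih
    intro x
    obtain ⟨δ, hδ, hb⟩ := this x
    refine ⟨δ, hδ, fun y hy hlt => ?_⟩
    have := hb y hy hlt
    simpa [Finset.sum_insert hx] using this

lemma rbox_of_rightCont {f : Pt n → ℤ} (hf : RightCont f) : RBoxP f := by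
  intro x
  have h1 : ∀ᶠ y in nhdsWithin x (Set.Ici x), f y = f x := by
    have := hf x
    rw [nhds_discrete ℤ, Filter.tendsto_pure] at this
    exact this
  obtain ⟨u, hu, hxu, hsub⟩ := mem_nhdsWithin.mp h1
  obtain ⟨r, hr, hball⟩ := Metric.isOpen_iff.mp hu x hxu
  refine ⟨r, hr, fun y hxy hlt => ?_⟩
  refine hsub ⟨hball ?_, hxy⟩
  rw [Metric.mem_ball, dist_pi_lt_iff hr]
  intro i
  rw [Real.dist_eq, abs_of_nonneg (sub_nonneg.mpr (hxy i))]
  linarith [hlt i]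

lemma exists_minimal_support {φ : Pt n → ℤ} (hbox : RBoxP φ) {a : ℝ}
    (hsupp : ∀ z : Pt n, φ z ≠ 0 → ∀ i, a ≤ z i) {x₀ : Pt n} (hx0 : φ x₀ ≠ 0) :
    ∃ q : Pt n, φ q ≠ 0 ∧ ∀ y : Pt n, y ≤ q → y ≠ q → φ y = 0 := by
  have key : ∀ c ⊆ {z : (Pt n)ᵒᵈ | φ (OrderDual.ofDual z) ≠ 0}, IsChain (· ≤ ·) c →
      ∀ y₀ ∈ c, ∃ ub ∈ {z : (Pt n)ᵒᵈ | φ (OrderDual.ofDual z) ≠ 0}, ∀ z ∈ c, z ≤ ub := by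
    intro c hcW hchain y₀ hy₀
    classical
    -- the pointwise infimum
    set zs : Pt n := fun i => sInf ((fun z : (Pt n)ᵒᵈ => OrderDual.ofDual z i) '' c) with hzs
    have hbddi : ∀ i : Fin n, BddBelow ((fun z : (Pt n)ᵒᵈ => OrderDual.ofDual z i) '' c) := by
      intro i
      refine ⟨a, fun r hr => ?_⟩
      obtain ⟨z, hz, rfl⟩ := hr
      exact hsupp _ (hcW hz) i
    have hnei : ∀ i : Fin n, ((fun z : (Pt n)ᵒᵈ => OrderDual.ofDual z i) '' c).Nonempty :=
      fun i => ⟨_, Set.mem_image_of_mem _ hy₀⟩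
    have hlb : ∀ z ∈ c, ∀ i, zs i ≤ OrderDual.ofDual z i := by
      intro z hz i
      exact csInf_le (hbddi i) (Set.mem_image_of_mem _ hz)
    -- for every δ > 0 there is a chain element in the box [zs, zs + δ)
    have hclose : ∀ δ : ℝ, 0 < δ → ∃ z ∈ c, ∀ i, OrderDual.ofDual z i < zs i + δ := by
      intro δ hδ
      have main : ∀ t : Finset (Fin n), ∃ z ∈ c, ∀ i ∈ t, OrderDual.ofDual z i < zs i + δ := by
        intro t
        induction t using Finset.induction_on with
        | empty => exact ⟨y₀, hy₀, by simp⟩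
        | insert _ _ hj ih =>
          rename_i j t'
          obtain ⟨z, hz, hzt⟩ := ih
          have hlt0 : sInf ((fun z : (Pt n)ᵒᵈ => OrderDual.ofDual z j) '' c) < zs j + δ := by
            have h0 : zs j < zs j + δ := lt_add_of_pos_right _ hδ
            rw [hzs] at h0
            exact h0
          obtain ⟨r, hr, hrlt⟩ := (csInf_lt_iff (hbddi j) (hnei j)).mp hlt0
          obtain ⟨zj, hzj, rfl⟩ := hr
          by_cases hzz : z = zj
          · refine ⟨z, hz, fun i hi => ?_⟩
            rcases Finset.mem_insert.mp hi with rfl | hi'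
            · rw [hzz]; exact hrlt
            · exact hzt i hi'
          · rcases hchain hz hzj hzz with hle | hle
            · -- dual order: z ≤ zj means ofDual zj ≤ ofDual z pointwise
              refine ⟨zj, hzj, fun i hi => ?_⟩
              rcases Finset.mem_insert.mp hi with rfl | hi'
              · exact hrlt
              · exact lt_of_le_of_lt (hle i) (hzt i hi')
            · refine ⟨z, hz, fun i hi => ?_⟩
              rcases Finset.mem_insert.mp hi with rfl | hi'
              · exact lt_of_le_of_lt (hle i) hrlt
              · exact hzt i hi'
      obtain ⟨z, hz, hzt⟩ := main Finset.univ
      exact ⟨z, hz, fun i => hzt i (Finset.mem_univ i)⟩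
    obtain ⟨δ, hδ, hb⟩ := hbox zs
    obtain ⟨z, hz, hzlt⟩ := hclose δ hδ
    have hzge : zs ≤ OrderDual.ofDual z := fun i => hlb z hz i
    have : φ (OrderDual.ofDual z) = φ zs := hb _ hzge hzlt
    refine ⟨OrderDual.toDual zs, ?_, fun w hw => ?_⟩
    · show φ zs ≠ 0
      rw [← this]
      exact hcW hz
    · exact fun i => hlb w hw i

  obtain ⟨m, -, hmax⟩ :=
    zorn_le_nonempty₀ (α := (Pt n)ᵒᵈ) {z : (Pt n)ᵒᵈ | φ (OrderDual.ofDual z) ≠ 0}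
      key (OrderDual.toDual x₀) hx0
  refine ⟨OrderDual.ofDual m, hmax.1, fun y hyq hne => ?_⟩
  by_contra hy0
  have hmem : OrderDual.toDual y ∈ {z : (Pt n)ᵒᵈ | φ (OrderDual.ofDual z) ≠ 0} := hy0
  have hle : m ≤ OrderDual.toDual y := hyq
  have := hmax.2 hmem hle
  exact hne (le_antisymm hyq this)

lemma sumLe_eq_sum {f : Pt n → ℤ} (hfin : {x : Pt n | diffl f x ≠ 0}.Finite) (z : Pt n) :
    sumLe (diffl f) z = ∑ y ∈ hfin.toFinset, if y ≤ z then diffl f y else 0 := by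
  classical
  rw [sumLe, finsum_mem_eq_sum_of_inter_support_eq (diffl f)
    (t := hfin.toFinset.filter (fun y => y ≤ z)) ?_, Finset.sum_filter]
  ext y
  simp only [Set.mem_inter_iff, Set.mem_setOf_eq, Function.mem_support, Finset.coe_filter,
    Set.Finite.mem_toFinset]
  tauto

lemma dlim_cornerSum (S' : Finset (Pt n)) (w : Pt n → ℤ) (x : Pt n)
    (s : Finset (Fin n)) :
    dlim (fun z => ∑ y ∈ S', if y ≤ z then w y else 0) x (basisVec n s)
      = ∑ y ∈ S', if chiP s y x then w y else 0 := by
  apply dlim_eq_of_eventually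
  have hev : ∀ᶠ ε in nhdsWithin (0:ℝ) (Set.Ioi 0),
      ∀ y ∈ S', (y ≤ x - ε • basisVec n s ↔ chiP s y x) := by
    rw [Filter.eventually_all_finset]
    exact fun y _ => eventually_le_iff y x s
  filter_upwards [hev] with ε hε
  exact Finset.sum_congr rfl fun y hy => if_congr (hε y hy) rfl rfl

lemma comb (y x : Pt n) :
    (∑ s : Finset (Fin n), (-1:ℤ) ^ s.card * (if chiP s y x then 1 else 0))
      = if y = x then 1 else 0 := by
  classical
  by_cases hyx : y ≤ x
  · set T : Finset (Fin n) := Finset.univ.filter (fun i => y i < x i) with hT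
    have hchi : ∀ s : Finset (Fin n), chiP s y x ↔ s ⊆ T := by
      intro s
      constructor
      · intro h i hi
        have := h i
        rw [if_pos hi] at this
        simp [hT, this]
      · intro hsub i
        by_cases hi : i ∈ s
        · rw [if_pos hi]
          have := hsub hi
          simp [hT] at this
          exact this
        · rw [if_neg hi]; exact hyx i
    have step1 : (∑ s : Finset (Fin n), (-1:ℤ) ^ s.card * (if chiP s y x then 1 else 0))
        = ∑ s : Finset (Fin n), (if s ∈ T.powerset then (-1:ℤ) ^ s.card else 0) := by
      apply Finset.sum_congr rfl
      intro s _
      by_cases h : chiP s y x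
      · rw [if_pos h, if_pos (Finset.mem_powerset.mpr ((hchi s).mp h)), mul_one]
      · rw [if_neg h, if_neg (fun hc => h ((hchi s).mpr (Finset.mem_powerset.mp hc))), mul_zero]
    rw [step1, Finset.sum_ite_mem, Finset.univ_inter, Finset.sum_powerset_neg_one_pow_card]
    have hiff : T = ∅ ↔ y = x := by
      constructor
      · intro hTe
        funext i
        have : i ∉ T := by rw [hTe]; exact Finset.notMem_empty i
        simp [hT] at this
        exact le_antisymm (hyx i) this
      · intro hxy
        subst hxy
        ext i
        simp [hT]
    exact if_congr hiff rfl rfl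
  · rw [if_neg (fun hc => hyx (le_of_eq hc))]
    apply Finset.sum_eq_zero
    intro s _
    have h : ¬ chiP s y x := by
      intro h
      apply hyx
      intro i
      have := h i
      by_cases hi : i ∈ s
      · rw [if_pos hi] at this; exact this.le
      · rw [if_neg hi] at this; exact this
    rw [if_neg h, mul_zero]

lemma diffl_cornerSum (S' : Finset (Pt n)) (w : Pt n → ℤ) (x : Pt n) :
    diffl (fun z => ∑ y ∈ S', if y ≤ z then w y else 0) x = if x ∈ S' then w x else 0 := by
  classical
  unfold diffl
  have step1 : ∀ s : Finset (Fin n),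
      (-1:ℤ) ^ s.card * dlim (fun z => ∑ y ∈ S', if y ≤ z then w y else 0) x (basisVec n s)
        = ∑ y ∈ S', w y * ((-1:ℤ) ^ s.card * (if chiP s y x then 1 else 0)) := by
    intro s
    rw [dlim_cornerSum S' w x s, Finset.mul_sum]
    apply Finset.sum_congr rfl
    intro y _
    by_cases h : chiP s y x
    · rw [if_pos h, if_pos h]; ring
    · rw [if_neg h, if_neg h]; ring
  rw [Finset.sum_congr rfl (fun s _ => step1 s), Finset.sum_comm]
  have step2 : ∀ y ∈ S',
      (∑ s : Finset (Fin n), w y * ((-1:ℤ) ^ s.card * (if chiP s y x then 1 else 0)))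
        = if y = x then w y else 0 := by
    intro y _
    rw [← Finset.mul_sum, comb y x]
    by_cases h : y = x
    · rw [if_pos h, if_pos h, mul_one]
    · rw [if_neg h, if_neg h, mul_zero]
  rw [Finset.sum_congr rfl step2, Finset.sum_ite_eq' S' x (fun y => w y)]

lemma diffl_g_eq {f : Pt n → ℤ} (hfin : {x : Pt n | diffl f x ≠ 0}.Finite) (x : Pt n) :
    diffl (fun z => ∑ y ∈ hfin.toFinset, if y ≤ z then diffl f y else 0) x = diffl f x := by
  classical
  rw [diffl_cornerSum]
  by_cases hx : x ∈ hfin.toFinset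
  · rw [if_pos hx]
  · rw [if_neg hx]
    have h0 : ¬ diffl f x ≠ 0 := by simpa using hx
    push_neg at h0
    exact h0.symm

lemma diffl_eq_zero_of_low {f : Pt n → ℤ} {a : ℝ}
    (ha : ∀ z : Pt n, f z ≠ 0 → ∀ i, a ≤ z i)
    {y : Pt n} {j : Fin n} (hyj : y j < a) : diffl f y = 0 := by
  unfold diffl
  apply Finset.sum_eq_zero
  intro s _
  have hz : dlim f y (basisVec n s) = 0 := by
    apply dlim_eq_of_eventually
    filter_upwards [self_mem_nhdsWithin] with ε hε
    have hε' : (0:ℝ) < ε := hε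
    by_contra hne
    have := ha _ hne j
    rw [sub_smul_basisVec_apply] at this
    by_cases hj : j ∈ s
    · rw [if_pos hj] at this; linarith
    · rw [if_neg hj] at this; linarith
  rw [hz, mul_zero]

end Stmt13Aux

/-- a nice function is recovered from its differential:
f(x) = Σ_{y ≤ x} Δf(y). -/
theorem stmt13 {n : ℕ} (f : Pt n → ℤ) (hf : NiceFn f) (x : Pt n) :
    f x = sumLe (diffl f) x := by
  classical
  obtain ⟨hrc, hfin, a, ha⟩ := hf
  rw [Stmt13Aux.sumLe_eq_sum hfin x]
  set g : Pt n → ℤ := fun z => ∑ y ∈ hfin.toFinset, if y ≤ z then diffl f y else 0 with hg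
  show f x = g x
  by_contra hne0
  set φ : Pt n → ℤ := fun z => f z - g z with hφ
  have hφx : φ x ≠ 0 := sub_ne_zero.mpr hne0
  have hSbd : ∀ y ∈ hfin.toFinset, ∀ i, a ≤ y i := by
    intro y hy i
    by_contra hlt
    push_neg at hlt
    have h0 : diffl f y = 0 := Stmt13Aux.diffl_eq_zero_of_low ha hlt
    rw [Set.Finite.mem_toFinset] at hy
    exact hy h0
  have hφbd : ∀ z : Pt n, φ z ≠ 0 → ∀ i, a ≤ z i := by
    intro z hz i
    by_cases hfz : f z = 0
    · have hgz : g z ≠ 0 := by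
        intro h
        apply hz
        show f z - g z = 0
        rw [hfz, h, sub_zero]
      obtain ⟨y, hy, hyne⟩ := Finset.exists_ne_zero_of_sum_ne_zero hgz
      have hyz : y ≤ z := by
        by_contra h
        rw [if_neg h] at hyne
        exact hyne rfl
      exact le_trans (hSbd y hy i) (hyz i)
    · exact ha z hfz i
  have hbox : Stmt13Aux.RBoxP φ :=
    Stmt13Aux.RBoxP.sub (Stmt13Aux.rbox_of_rightCont hrc) (Stmt13Aux.rbox_sum _ _)
  obtain ⟨q, hq0, hqmin⟩ := Stmt13Aux.exists_minimal_support hbox hφbd hφx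
  have h2 : ∀ s : Finset (Fin n), s ≠ ∅ →
      dlim f q (basisVec n s) = dlim g q (basisVec n s) := by
    intro s hs
    have hev : (fun ε : ℝ => f (q - ε • basisVec n s))
        =ᶠ[nhdsWithin (0:ℝ) (Set.Ioi 0)] (fun ε : ℝ => g (q - ε • basisVec n s)) := by
      filter_upwards [self_mem_nhdsWithin] with ε hε
      have hε' : (0:ℝ) < ε := hε
      have hle : q - ε • basisVec n s ≤ q := by
        intro i
        rw [Stmt13Aux.sub_smul_basisVec_apply]
        by_cases hi : i ∈ s
        · rw [if_pos hi]; linarith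
        · rw [if_neg hi]; linarith
      have hne' : q - ε • basisVec n s ≠ q := by
        obtain ⟨i, hi⟩ := Finset.nonempty_iff_ne_empty.mpr hs
        intro hc
        have hci := congrFun hc i
        rw [Stmt13Aux.sub_smul_basisVec_apply, if_pos hi] at hci
        linarith
      have h0 : φ (q - ε • basisVec n s) = 0 := hqmin _ hle hne'
      have h0' : f (q - ε • basisVec n s) - g (q - ε • basisVec n s) = 0 := h0
      exact sub_eq_zero.mp h0'
    simp only [dlim, limUnder]
    rw [Filter.map_congr hev]
  have h1 : diffl g q = diffl f q := Stmt13Aux.diffl_g_eq hfin q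
  have h3 : diffl f q - diffl g q = φ q := by
    unfold diffl
    rw [← Finset.sum_sub_distrib]
    rw [Finset.sum_eq_single (∅ : Finset (Fin n))]
    · rw [Stmt13Aux.dlim_empty f q, Stmt13Aux.dlim_empty g q]
      show (-1:ℤ) ^ (∅ : Finset (Fin n)).card * f q - (-1:ℤ) ^ (∅ : Finset (Fin n)).card * g q
        = φ q
      have : φ q = f q - g q := rfl
      rw [this]
      simp
    · intro s _ hsne
      rw [h2 s hsne]
      ring
    · intro h
      exact absurd (Finset.mem_univ ∅) h
  rw [h1, sub_self] at h3
  exact hq0 h3.symm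

end
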